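/- For each $T \in \mathcal{T}(1,n)$ let $p_T = \prod_{i\to j \text{ in } T}(z_i - z_j) \in \mathbb{C}[z_1,\dots,z_n]$. Then the set $\{1/p_T : T \in \mathcal{T}(1,n)^{\circ}\}$ of rational functions, as $T$ ranges over rectified directed trees on $\{1,\dots,n\}$, is linearly independent over $\mathbb{C}$ in $\mathbb{C}(z_1,\dots,z_n)$. -/

import Mathlib

/-- A directed tree on `{1,…,n}`, encoded by the map `p` sending each vertex to the endpoint
of its unique outgoing edge; the root is sent to itself. -/
def IsTreeFn {I : Type*} (p : I → I) : Prop :=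
  ∃ r : I, p r = r ∧ ∀ i : I, ∃ k : ℕ, p^[k] i = r

open MvPolynomial in
/-- `p_T = ∏_{i → j in T} (z_i - z_j)`, the product over the edges of the tree
(the non-root vertices `i`, with `j = p i`). -/
noncomputable def treePoly {n : ℕ} (p : Fin n → Fin n) : MvPolynomial (Fin n) ℂ :=
  ∏ i ∈ Finset.univ.filter (fun i => p i ≠ i), (X i - X (p i))

open MvPolynomial Finset

noncomputable def compPoly {n : ℕ} (p : Fin n → Fin n) : MvPolynomial (Fin n) ℂ :=
  ∏ e ∈ Finset.univ.filter (fun e : Fin n × Fin n => e.1 < e.2 ∧ p e.1 ≠ e.2), (X e.1 - X e.2)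

noncomputable def qpoly (n : ℕ) : MvPolynomial (Fin n) ℂ :=
  ∏ e ∈ Finset.univ.filter (fun e : Fin n × Fin n => e.1 < e.2), (X e.1 - X e.2)

def dm {n : ℕ} (x : Fin (n+2)) : Fin (n+1) := ⟨x.1 - 1, by have := x.isLt; omega⟩
def um {n : ℕ} (x : Fin (n+1)) : Fin (n+2) := ⟨x.1 + 1, by have := x.isLt; omega⟩
def sig {n : ℕ} (j i : Fin (n+2)) : Fin (n+1) := if i = 0 then dm j else dm i
def resp {n : ℕ} (p : Fin (n+2) → Fin (n+2)) (a : Fin (n+1)) : Fin (n+1) := dm (p (um a))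

lemma dm_val {n : ℕ} (x : Fin (n+2)) : (dm x).1 = x.1 - 1 := rfl
lemma um_val {n : ℕ} (x : Fin (n+1)) : (um x).1 = x.1 + 1 := rfl

lemma um_dm {n : ℕ} (x : Fin (n+2)) (hx : x ≠ 0) : um (dm x) = x := by
  have := x.isLt
  have hx' : x.1 ≠ 0 := fun hh0 => hx (Fin.ext (by simp [hh0]))
  apply Fin.ext
  simp only [um_val, dm_val]
  omega

lemma dm_um {n : ℕ} (x : Fin (n+1)) : dm (um x) = x := by
  apply Fin.ext; simp [um_val, dm_val]

lemma le_apply {N : ℕ} {p : Fin N → Fin N} (hr : ∀ i, p i ≠ i → i < p i) (x : Fin N) :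
    x ≤ p x := by
  by_cases h : p x = x
  · exact le_of_eq h.symm
  · exact (hr x h).le

lemma le_iterate {N : ℕ} {p : Fin N → Fin N} (hr : ∀ i, p i ≠ i → i < p i) (k : ℕ) (x : Fin N) :
    x ≤ p^[k] x := by
  induction k with
  | zero => simp
  | succ k ih => rw [Function.iterate_succ_apply']; exact ih.trans (le_apply hr _)

lemma root_ge {N : ℕ} {p : Fin N → Fin N} {r : Fin N} (hr : ∀ i, p i ≠ i → i < p i)
    (hre : ∀ i, ∃ k, p^[k] i = r) (x : Fin N) : x ≤ r := by
  obtain ⟨k, hk⟩ := hre x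
  exact hk ▸ le_iterate hr k x

lemma p0_ne {n : ℕ} {p : Fin (n+2) → Fin (n+2)} (ht : IsTreeFn p)
    (hr : ∀ i, p i ≠ i → i < p i) : p 0 ≠ 0 := by
  obtain ⟨r, hfix, hre⟩ := ht
  intro h0
  have h1 : (1 : Fin (n+2)) ≤ r := root_ge hr hre 1
  obtain ⟨k, hk⟩ := hre 0
  rw [Function.iterate_fixed h0] at hk
  rw [← hk] at h1
  simp [Fin.le_def] at h1

lemma resp_rect {n : ℕ} {p : Fin (n+2) → Fin (n+2)} (hr : ∀ i, p i ≠ i → i < p i) :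
    ∀ a, resp p a ≠ a → a < resp p a := by
  intro a ha
  have h := le_apply hr (um a)
  rw [Fin.le_def] at h
  rw [Fin.lt_def]
  have hv : (resp p a).1 = (p (um a)).1 - 1 := rfl
  have hu : (um a).1 = a.1 + 1 := rfl
  rw [hv]
  rw [hu] at h
  have hane : (resp p a).1 ≠ a.1 := fun hh => ha (Fin.ext hh)
  rw [hv] at hane
  omega

lemma resp_iterate {n : ℕ} {p : Fin (n+2) → Fin (n+2)} (hr : ∀ i, p i ≠ i → i < p i)
    (k : ℕ) (a : Fin (n+1)) : (resp p)^[k] a = dm (p^[k] (um a)) := by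
  induction k with
  | zero => simp [dm_um]
  | succ k ih =>
    rw [Function.iterate_succ_apply', Function.iterate_succ_apply', ih]
    show dm (p (um (dm (p^[k] (um a))))) = dm (p (p^[k] (um a)))
    have h1 := le_iterate hr k (um a)
    rw [Fin.le_def] at h1
    have hu : (um a).1 = a.1 + 1 := rfl
    rw [hu] at h1
    have hne : p^[k] (um a) ≠ 0 := by
      intro hh
      rw [hh] at h1
      simp at h1
    rw [um_dm _ hne]

lemma resp_tree {n : ℕ} {p : Fin (n+2) → Fin (n+2)} (ht : IsTreeFn p)
    (hr : ∀ i, p i ≠ i → i < p i) : IsTreeFn (resp p) := by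
  obtain ⟨r, hfix, hre⟩ := ht
  have hrne : r ≠ 0 := by
    have h1 : (1 : Fin (n+2)) ≤ r := root_ge hr hre 1
    intro h
    rw [h] at h1
    simp [Fin.le_def] at h1
  refine ⟨dm r, ?_, ?_⟩
  · show dm (p (um (dm r))) = dm r
    rw [um_dm r hrne, hfix]
  · intro a
    obtain ⟨k, hk⟩ := hre (um a)
    exact ⟨k, by rw [resp_iterate hr, hk]⟩

lemma resp_inj {n : ℕ} {p q : Fin (n+2) → Fin (n+2)}
    (hp : ∀ i, p i ≠ i → i < p i) (hq : ∀ i, q i ≠ i → i < q i)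
    (h0 : p 0 = q 0) (h : resp p = resp q) : p = q := by
  funext x
  by_cases hx : x = 0
  · rw [hx]; exact h0
  · have hx' : um (dm x) = x := um_dm x hx
    have hh := congrFun h (dm x)
    have e1 : resp p (dm x) = dm (p x) := by unfold resp; rw [hx']
    have e2 : resp q (dm x) = dm (q x) := by unfold resp; rw [hx']
    rw [e1, e2] at hh
    have hp1 := le_apply hp x
    have hq1 := le_apply hq x
    have hxv : x.1 ≠ 0 := fun hh0 => hx (Fin.ext (by simp [hh0]))
    rw [Fin.le_def] at hp1 hq1
    have hhv : (p x).1 - 1 = (q x).1 - 1 := congrArg Fin.val hh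
    apply Fin.ext
    omega

lemma X_sub_ne {n : ℕ} {a b : Fin n} (h : a ≠ b) : (X a - X b : MvPolynomial (Fin n) ℂ) ≠ 0 :=
  sub_ne_zero_of_ne (fun hh => h (MvPolynomial.X_injective hh))

lemma qpoly_ne (n : ℕ) : qpoly n ≠ 0 :=
  Finset.prod_ne_zero_iff.mpr (fun e he => X_sub_ne (ne_of_lt (Finset.mem_filter.mp he).2))

lemma treePoly_ne {n : ℕ} (p : Fin n → Fin n) : treePoly p ≠ 0 :=
  Finset.prod_ne_zero_iff.mpr (fun i hi =>
    X_sub_ne (Ne.symm (Finset.mem_filter.mp hi).2))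

noncomputable def dpoly {n : ℕ} (j : Fin (n+1)) : MvPolynomial (Fin (n+1)) ℂ :=
  ∏ m ∈ Finset.univ.filter (fun m => m ≠ j), (X j - X m)

lemma dpoly_ne {n : ℕ} (j : Fin (n+1)) : dpoly j ≠ 0 :=
  Finset.prod_ne_zero_iff.mpr (fun m hm =>
    X_sub_ne (Ne.symm (Finset.mem_filter.mp hm).2))

lemma treePoly_pair {n : ℕ} {p : Fin n → Fin n} (hr : ∀ i, p i ≠ i → i < p i) :
    treePoly p
      = ∏ e ∈ Finset.univ.filter (fun e : Fin n × Fin n => e.1 < e.2 ∧ p e.1 = e.2),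
          (X e.1 - X e.2) := by
  unfold treePoly
  refine Finset.prod_nbij' (fun a => (a, p a)) (fun e => e.1) ?_ ?_ ?_ ?_ ?_
  · intro a ha
    simp only [mem_filter, mem_univ, true_and] at ha
    simp only [mem_filter, mem_univ, true_and, and_true]
    exact hr a ha
  · intro e he
    simp only [mem_filter, mem_univ, true_and] at he ⊢
    rw [he.2]
    exact ne_of_gt he.1
  · intro a _; rfl
  · intro e he
    simp only [mem_filter, mem_univ, true_and] at he
    exact Prod.ext_iff.mpr ⟨rfl, he.2⟩
  · intro a _; rfl

lemma qpoly_factor {n : ℕ} {p : Fin n → Fin n} (hr : ∀ i, p i ≠ i → i < p i) :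
    qpoly n = treePoly p * compPoly p := by
  rw [treePoly_pair hr]
  unfold qpoly compPoly
  have hset : (Finset.univ.filter (fun e : Fin n × Fin n => e.1 < e.2)).filter
      (fun e => p e.1 = e.2)
      = Finset.univ.filter (fun e : Fin n × Fin n => e.1 < e.2 ∧ p e.1 = e.2) := by
    rw [Finset.filter_filter]
  have hset2 : (Finset.univ.filter (fun e : Fin n × Fin n => e.1 < e.2)).filter
      (fun e => ¬ p e.1 = e.2)
      = Finset.univ.filter (fun e : Fin n × Fin n => e.1 < e.2 ∧ p e.1 ≠ e.2) := by
    rw [Finset.filter_filter]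
  rw [← hset, ← hset2, Finset.prod_filter_mul_prod_filter_not]

lemma rename_comp_zero {n : ℕ} {p : Fin (n+2) → Fin (n+2)} {j : Fin (n+2)}
    (hj0 : j ≠ 0) (hpj : p 0 ≠ j) :
    rename (sig j) (compPoly p) = 0 := by
  unfold compPoly
  rw [map_prod]
  refine Finset.prod_eq_zero (i := ((0 : Fin (n+2)), j)) ?_ ?_
  · simp only [mem_filter, mem_univ, true_and]
    refine ⟨?_, hpj⟩
    rw [Fin.lt_def]
    have : j.1 ≠ 0 := fun hh0 => hj0 (Fin.ext (by simp [hh0]))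
    simp only [Fin.val_zero]
    omega
  · rw [map_sub, rename_X, rename_X]
    have h1 : sig j 0 = dm j := if_pos rfl
    have h2 : sig j j = dm j := if_neg hj0
    rw [h1, h2, sub_self]

lemma rename_comp {n : ℕ} {p : Fin (n+2) → Fin (n+2)} {j : Fin (n+2)}
    (hrect : ∀ i, p i ≠ i → i < p i) (hj0 : j ≠ 0) (hpj : p 0 = j) :
    rename (sig j) (compPoly p) = dpoly (dm j) * compPoly (resp p) := by
  have hjv : j.1 ≠ 0 := fun hh0 => hj0 (Fin.ext (by simp [hh0]))
  unfold compPoly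
  rw [map_prod]
  simp only [map_sub, rename_X]
  rw [← Finset.prod_filter_mul_prod_filter_not
      (Finset.univ.filter (fun e : Fin (n+2) × Fin (n+2) => e.1 < e.2 ∧ p e.1 ≠ e.2))
      (fun e => e.1 = 0)]
  congr 1
  · -- zero part = dpoly (dm j)
    unfold dpoly
    refine Finset.prod_nbij' (fun e => dm e.2) (fun m => ((0 : Fin (n+2)), um m))
      ?_ ?_ ?_ ?_ ?_
    · intro e he
      simp only [mem_filter, mem_univ, true_and] at he ⊢
      obtain ⟨⟨hlt, hne⟩, h0⟩ := he
      rw [h0, hpj] at hne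
      rw [h0, Fin.lt_def] at hlt
      simp only [Fin.val_zero] at hlt
      have hnev : j.1 ≠ e.2.1 := fun hh => hne (Fin.ext hh)
      have : (dm e.2).1 = e.2.1 - 1 := rfl
      intro hcon
      have := congrArg Fin.val hcon
      rw [dm_val, dm_val] at this
      omega
    · intro m hm
      simp only [mem_filter, mem_univ, true_and] at hm ⊢
      have hmv : m.1 ≠ j.1 - 1 := by
        intro hh
        exact hm (Fin.ext (by rw [dm_val, ← hh]))
      refine ⟨⟨?_, ?_⟩, trivial⟩
      · rw [Fin.lt_def]
        simp [um_val]
      · rw [hpj]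
        intro hh
        have := congrArg Fin.val hh
        rw [um_val] at this
        omega
    · intro e he
      simp only [mem_filter, mem_univ, true_and] at he
      obtain ⟨⟨hlt, _⟩, h0⟩ := he
      have h2 : e.2 ≠ 0 := by
        rw [h0, Fin.lt_def] at hlt
        simp only [Fin.val_zero] at hlt
        intro hh; rw [hh] at hlt; simp at hlt
      exact Prod.ext_iff.mpr ⟨h0.symm, um_dm e.2 h2⟩
    · intro m _
      exact dm_um m
    · intro e he
      simp only [mem_filter, mem_univ, true_and] at he
      obtain ⟨⟨hlt, _⟩, h0⟩ := he
      have h2 : e.2 ≠ 0 := by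
        rw [h0, Fin.lt_def] at hlt
        simp only [Fin.val_zero] at hlt
        intro hh; rw [hh] at hlt; simp at hlt
      have hs1 : sig j e.1 = dm j := by rw [h0]; exact if_pos rfl
      have hs2 : sig j e.2 = dm e.2 := if_neg h2
      rw [hs1, hs2]
  · -- positive part = compPoly (resp p)
    refine Finset.prod_nbij' (fun e => (dm e.1, dm e.2)) (fun e => (um e.1, um e.2))
      ?_ ?_ ?_ ?_ ?_
    · intro e he
      simp only [mem_filter, mem_univ, true_and] at he ⊢
      obtain ⟨⟨hlt, hne⟩, h0⟩ := he
      have h0v : e.1.1 ≠ 0 := fun hh0 => h0 (Fin.ext (by simp [hh0]))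
      have hle := le_apply hrect e.1
      rw [Fin.le_def] at hle
      rw [Fin.lt_def] at hlt
      constructor
      · rw [Fin.lt_def, dm_val, dm_val]
        omega
      · show ¬ dm (p (um (dm e.1))) = dm e.2
        rw [um_dm e.1 h0]
        intro hh
        have := congrArg Fin.val hh
        rw [dm_val, dm_val] at this
        have hnev : (p e.1).1 ≠ e.2.1 := fun hh2 => hne (Fin.ext hh2)
        omega
    · intro e he
      simp only [mem_filter, mem_univ, true_and] at he ⊢
      obtain ⟨hlt, hne⟩ := he
      rw [Fin.lt_def] at hlt
      refine ⟨⟨?_, ?_⟩, ?_⟩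
      · rw [Fin.lt_def, um_val, um_val]; omega
      · intro heq
        apply hne
        show dm (p (um e.1)) = e.2
        rw [heq, dm_um]
      · intro hh
        have := congrArg Fin.val hh
        rw [um_val] at this
        simp at this
    · intro e he
      simp only [mem_filter, mem_univ, true_and] at he
      obtain ⟨⟨hlt, _⟩, h0⟩ := he
      rw [Fin.lt_def] at hlt
      have h0v : e.1.1 ≠ 0 := fun hh0 => h0 (Fin.ext (by simp [hh0]))
      have h2 : e.2 ≠ 0 := by
        intro hh
        rw [hh] at hlt
        simp only [Fin.val_zero] at hlt
        omega
      exact Prod.ext_iff.mpr ⟨um_dm e.1 h0, um_dm e.2 h2⟩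
    · intro e _
      exact Prod.ext_iff.mpr ⟨dm_um e.1, dm_um e.2⟩
    · intro e he
      simp only [mem_filter, mem_univ, true_and] at he
      obtain ⟨⟨hlt, _⟩, h0⟩ := he
      rw [Fin.lt_def] at hlt
      have h0v : e.1.1 ≠ 0 := fun hh0 => h0 (Fin.ext (by simp [hh0]))
      have h2 : e.2 ≠ 0 := by
        intro hh
        rw [hh] at hlt
        simp only [Fin.val_zero] at hlt
        omega
      have hs1 : sig j e.1 = dm e.1 := if_neg h0
      have hs2 : sig j e.2 = dm e.2 := if_neg h2
      rw [hs1, hs2]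

lemma key (n : ℕ) :
    LinearIndependent ℂ
      (fun T : {p : Fin n → Fin n // IsTreeFn p ∧ ∀ i, p i ≠ i → i < p i} =>
        compPoly T.1) := by
  induction n with
  | zero =>
    have : IsEmpty {p : Fin 0 → Fin 0 // IsTreeFn p ∧ ∀ i, p i ≠ i → i < p i} :=
      ⟨fun T => (T.2.1.choose).elim0⟩
    exact linearIndependent_empty_type
  | succ m ih =>
    obtain _ | n := m
    · -- Fin 1 case
      haveI hsub : Subsingleton {p : Fin 1 → Fin 1 // IsTreeFn p ∧ ∀ i, p i ≠ i → i < p i} :=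
        ⟨fun a b => Subtype.ext (Subsingleton.elim _ _)⟩
      rw [linearIndependent_iff']
      intro s g hsum T hT
      have hs : s = {T} :=
        Finset.eq_singleton_iff_unique_mem.mpr ⟨hT, fun x _ => Subsingleton.elim x T⟩
      rw [hs, Finset.sum_singleton] at hsum
      have hcomp : compPoly T.1 = 1 := by
        unfold compPoly
        rw [Finset.filter_false_of_mem, Finset.prod_empty]
        intro e _
        intro hcon
        have h1 := e.1.isLt
        have h2 := e.2.isLt
        have := hcon.1
        rw [Fin.lt_def] at this
        omega
      rw [hcomp] at hsum
      exact (smul_eq_zero.mp hsum).resolve_right one_ne_zero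
    · -- Fin (n+2) case
      rw [linearIndependent_iff']
      intro s g hsum T₀ hT₀
      classical
      set j := T₀.1 0 with hjdef
      have hj0 : j ≠ 0 := p0_ne T₀.2.1 T₀.2.2
      set Φ : {p : Fin (n+2) → Fin (n+2) // IsTreeFn p ∧ ∀ i, p i ≠ i → i < p i} →
              {p : Fin (n+1) → Fin (n+1) // IsTreeFn p ∧ ∀ i, p i ≠ i → i < p i} :=
        fun T => ⟨resp T.1, resp_tree T.2.1 T.2.2, resp_rect T.2.2⟩ with hΦdef
      have happ := congrArg (rename (sig j)) hsum
      rw [map_sum, map_zero] at happ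
      have happ2 : ∑ T ∈ s, g T • (rename (sig j)) (compPoly T.1) = 0 := by
        rw [← happ]
        exact Finset.sum_congr rfl (fun T _ => (map_smul (rename (sig j)) _ _).symm)
      rw [← Finset.sum_filter_add_sum_filter_not s (fun T => T.1 0 = j)] at happ2
      have hz : ∑ T ∈ s.filter (fun T => ¬ T.1 0 = j),
          g T • (rename (sig j)) (compPoly T.1) = 0 :=
        Finset.sum_eq_zero (fun T hT => by
          rw [rename_comp_zero hj0 (Finset.mem_filter.mp hT).2, smul_zero])
      rw [hz, add_zero] at happ2
      have happ3 : dpoly (dm j) *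
          ∑ T ∈ s.filter (fun T => T.1 0 = j), g T • compPoly (Φ T).1 = 0 := by
        rw [Finset.mul_sum, ← happ2]
        refine Finset.sum_congr rfl (fun T hT => ?_)
        rw [rename_comp T.2.2 hj0 (Finset.mem_filter.mp hT).2, mul_smul_comm]
      have hsum2 : ∑ T ∈ s.filter (fun T => T.1 0 = j), g T • compPoly (Φ T).1 = 0 := by
        rcases mul_eq_zero.mp happ3 with h | h
        · exact absurd h (dpoly_ne _)
        · exact h
      set S0 := s.filter (fun T => T.1 0 = j) with hS0def
      haveI : Nonempty {p : Fin (n+2) → Fin (n+2) // IsTreeFn p ∧ ∀ i, p i ≠ i → i < p i} :=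
        ⟨T₀⟩
      have hinj : ∀ T ∈ S0, ∀ T' ∈ S0, Φ T = Φ T' → T = T' := by
        intro T hT T' hT' h
        apply Subtype.ext
        exact resp_inj T.2.2 T'.2.2
          ((Finset.mem_filter.mp hT).2.trans (Finset.mem_filter.mp hT').2.symm)
          (congrArg Subtype.val h)
      have hinjOn : Set.InjOn Φ ↑S0 := fun a ha b hb h =>
        hinj a (Finset.mem_coe.mp ha) b (Finset.mem_coe.mp hb) h
      set g' := fun T' => g (Function.invFunOn Φ ↑S0 T') with hg'def
      have himg : ∑ T' ∈ S0.image Φ, g' T' • compPoly T'.1 = 0 := by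
        rw [Finset.sum_image hinj, ← hsum2]
        refine Finset.sum_congr rfl (fun T hT => ?_)
        rw [hg'def]
        simp only
        rw [hinjOn.leftInvOn_invFunOn (Finset.mem_coe.mpr hT)]
      have hT₀S0 : T₀ ∈ S0 := Finset.mem_filter.mpr ⟨hT₀, rfl⟩
      have hres := linearIndependent_iff'.mp ih (S0.image Φ) g' himg (Φ T₀)
        (Finset.mem_image_of_mem Φ hT₀S0)
      rw [hg'def] at hres
      simp only at hres
      rw [hinjOn.leftInvOn_invFunOn (Finset.mem_coe.mpr hT₀S0)] at hres
      exact hres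

/-- The rational functions `1/p_T`, as `T` ranges over the rectified directed trees on
`{1,…,n}`, are linearly independent over `ℂ` in `ℂ(z_1,…,z_n)`. -/
theorem stmt3 (n : ℕ) :
    LinearIndependent ℂ
      (fun T : {p : Fin n → Fin n // IsTreeFn p ∧ ∀ i, p i ≠ i → i < p i} =>
        (algebraMap (MvPolynomial (Fin n) ℂ) (FractionRing (MvPolynomial (Fin n) ℂ))
          (treePoly T.1))⁻¹) := by
  classical
  set A := MvPolynomial (Fin n) ℂ with hA
  set K := FractionRing A with hK
  have halg : Function.Injective (algebraMap A K) := IsFractionRing.injective A K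
  have hQ : algebraMap A K (qpoly n) ≠ 0 := fun h =>
    qpoly_ne n (halg (by rw [h, map_zero]))
  set ℓ : K →ₗ[ℂ] K := LinearMap.mulLeft ℂ (algebraMap A K (qpoly n)) with hℓ
  refine LinearIndependent.of_comp ℓ ?_
  have hmap : LinearIndependent ℂ
      (fun T : {p : Fin n → Fin n // IsTreeFn p ∧ ∀ i, p i ≠ i → i < p i} =>
        algebraMap A K (compPoly T.1)) := by
    have h2 := (key n).map' (IsScalarTower.toAlgHom ℂ A K).toLinearMap
      (LinearMap.ker_eq_bot.mpr (by
        intro x y hxy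
        exact halg hxy))
    exact h2
  convert hmap using 1
  funext T
  have ht : algebraMap A K (treePoly T.1) ≠ 0 := fun h =>
    treePoly_ne T.1 (halg (by rw [h, map_zero]))
  show algebraMap A K (qpoly n) * (algebraMap A K (treePoly T.1))⁻¹
      = algebraMap A K (compPoly T.1)
  rw [qpoly_factor T.2.2, map_mul, mul_comm (algebraMap A K (treePoly T.1)),
    mul_assoc, mul_inv_cancel₀ ht, mul_one]
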